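/- arXiv:2307.03612 — 5 statements merged into one kernel-verified Lean document; each statement's English description precedes it below -/
import Mathlib

section
/- Let z be a point in a real Hilbert space X and let x : [t₀, ∞) → X be a C¹ function with t₀ > 0 and α > 1. If there exists a constant C > 0 such that (1/2)‖x(t) - z + (t/(α-1)) x'(t)‖² ≤ C for all t ≥ t₀, then the trajectory (x(t))_{t ≥ t₀} is bounded. -/
open Set

theorem stmt_0 {X : Type*} [NormedAddCommGroup X] [InnerProductSpace ℝ X] [CompleteSpace X]
    (t₀ α C : ℝ) (ht₀ : 0 < t₀) (hα : 1 < α) (hC : 0 < C)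
    (z : X) (x x' : ℝ → X)
    (hderiv : ∀ t ∈ Ici t₀, HasDerivAt x (x' t) t)
    (hcont : ContinuousOn x' (Ici t₀))
    (hbound : ∀ t ∈ Ici t₀, (1/2) * ‖x t - z + (t/(α-1)) • x' t‖^2 ≤ C) :
    ∃ M : ℝ, ∀ t ∈ Ici t₀, ‖x t‖ ≤ M := by
  have hα1 : (0:ℝ) < α - 1 := by linarith
  set K : ℝ := Real.sqrt (2*C) with hK
  have hKnn : 0 ≤ K := Real.sqrt_nonneg _
  have hu : ∀ t ∈ Ici t₀, ‖x t - z + (t/(α-1)) • x' t‖ ≤ K := by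
    intro t ht
    have h := hbound t ht
    have h2 : ‖x t - z + (t/(α-1)) • x' t‖^2 ≤ 2*C := by linarith
    calc ‖x t - z + (t/(α-1)) • x' t‖
        = Real.sqrt (‖x t - z + (t/(α-1)) • x' t‖^2) :=
          (Real.sqrt_sq (norm_nonneg _)).symm
      _ ≤ K := Real.sqrt_le_sqrt h2
  set f : ℝ → X := fun t => (t ^ (α-1) : ℝ) • (x t - z) with hf
  have hderivf : ∀ t ∈ Ici t₀, HasDerivAt f
      (((α-1) * t ^ (α-2)) • (x t - z + (t/(α-1)) • x' t)) t := by
    intro t ht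
    have htpos : 0 < t := lt_of_lt_of_le ht₀ ht
    have h1 : HasDerivAt (fun s : ℝ => s ^ (α-1)) ((α-1) * t ^ (α-1-1)) t :=
      Real.hasDerivAt_rpow_const (Or.inl htpos.ne')
    have h2 : HasDerivAt (fun s => x s - z) (x' t) t := (hderiv t ht).sub_const z
    have hd := h1.smul h2
    convert hd using 1
    · rfl
    have e1 : α - 1 - 1 = α - 2 := by ring
    have e2 : t ^ (α-2) * t = t ^ (α-1) := by
      rw [← Real.rpow_add_one htpos.ne' (α-2)]; congr 1; ring
    have e3 : (α-1) * t^(α-2) * (t/(α-1)) = t ^ (α-1) := by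
      rw [← e2]; field_simp
    rw [smul_add, smul_smul, e3, e1, add_comm]
  set B : ℝ → ℝ := fun t => t₀ ^ (α-1) * ‖x t₀ - z‖ + K * (t ^ (α-1) - t₀ ^ (α-1)) with hB
  have hderivB : ∀ s : ℝ, 0 < s → HasDerivAt B (K * ((α-1) * s ^ (α-2))) s := by
    intro s hspos
    have h1 : HasDerivAt (fun u : ℝ => u ^ (α-1)) ((α-1) * s ^ (α-1-1)) s :=
      Real.hasDerivAt_rpow_const (Or.inl hspos.ne')
    rw [show α-1-1 = α-2 by ring] at h1
    exact ((h1.sub_const (t₀ ^ (α-1))).const_mul K).const_add (t₀ ^ (α-1) * ‖x t₀ - z‖)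
  have hmain : ∀ t ∈ Ici t₀, ‖f t‖ ≤ B t := by
    intro b hb
    have key : ∀ s ∈ Icc t₀ b, ‖f s‖ ≤ B s := by
      intro s hs
      refine image_norm_le_of_norm_deriv_right_le_deriv_boundary'
        (f' := fun s => ((α-1) * s ^ (α-2)) • (x s - z + (s/(α-1)) • x' s))
        (B' := fun s => K * ((α-1) * s ^ (α-2)))
        ?_ ?_ ?_ ?_ ?_ ?_ hs
      · exact fun u hu => (hderivf u hu.1).continuousAt.continuousWithinAt
      · exact fun u hu => (hderivf u hu.1).hasDerivWithinAt
      · rw [hf, hB]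
        simp [norm_smul, abs_of_pos (Real.rpow_pos_of_pos ht₀ (α-1))]
      · exact fun u hu =>
          (hderivB u (lt_of_lt_of_le ht₀ hu.1)).continuousAt.continuousWithinAt
      · exact fun u hu => (hderivB u (lt_of_lt_of_le ht₀ hu.1)).hasDerivWithinAt
      · intro u hu'
        have hupos : 0 < u := lt_of_lt_of_le ht₀ hu'.1
        rw [norm_smul, Real.norm_eq_abs,
          abs_of_pos (by positivity : (0:ℝ) < (α-1)*u^(α-2))]
        exact (mul_le_mul_of_nonneg_left (hu u hu'.1)
          (by positivity : (0:ℝ) ≤ (α-1)*u^(α-2))).trans_eq (mul_comm _ _)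
    exact key b ⟨hb, le_refl b⟩
  refine ⟨‖z‖ + ‖x t₀ - z‖ + K, fun t ht => ?_⟩
  have htpos : 0 < t := lt_of_lt_of_le ht₀ ht
  have hpow : t₀ ^ (α-1) ≤ t ^ (α-1) := Real.rpow_le_rpow ht₀.le ht hα1.le
  have h1 := hmain t ht
  have h2 : ‖f t‖ = t ^ (α-1) * ‖x t - z‖ := by
    rw [hf]; simp [norm_smul, abs_of_pos (Real.rpow_pos_of_pos htpos _)]
  have h3 : B t ≤ t ^ (α-1) * (‖x t₀ - z‖ + K) := by
    have h31 : t₀ ^ (α-1) * ‖x t₀ - z‖ ≤ t ^ (α-1) * ‖x t₀ - z‖ :=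
      mul_le_mul_of_nonneg_right hpow (norm_nonneg _)
    have h32 : K * (t ^ (α-1) - t₀ ^ (α-1)) ≤ K * t ^ (α-1) := by
      nlinarith [mul_nonneg hKnn (le_of_lt (Real.rpow_pos_of_pos ht₀ (α-1)))]
    calc B t = t₀ ^ (α-1) * ‖x t₀ - z‖ + K * (t ^ (α-1) - t₀ ^ (α-1)) := rfl
      _ ≤ t ^ (α-1) * ‖x t₀ - z‖ + K * t ^ (α-1) := by linarith
      _ = t ^ (α-1) * (‖x t₀ - z‖ + K) := by ring
  have h4 : t ^ (α-1) * ‖x t - z‖ ≤ t ^ (α-1) * (‖x t₀ - z‖ + K) := by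
    rw [← h2]; exact h1.trans h3
  have h5 : ‖x t - z‖ ≤ ‖x t₀ - z‖ + K :=
    le_of_mul_le_mul_left h4 (Real.rpow_pos_of_pos htpos _)
  calc ‖x t‖ = ‖z + (x t - z)‖ := by rw [show z + (x t - z) = x t by abel]
    _ ≤ ‖z‖ + ‖x t - z‖ := norm_add_le _ _
    _ ≤ ‖z‖ + (‖x t₀ - z‖ + K) := by linarith
    _ = ‖z‖ + ‖x t₀ - z‖ + K := by ring
end

section
/- Let g : [t₀, ∞) → ℝⁿ be continuous and a : [t₀, ∞) → [0, ∞) be continuous, with t₀ > 0. If there exists a constant C ≥ 0 such that ‖g(t) + ∫_{t₀}^{t} a(s) g(s) ds‖ ≤ C for all t ≥ t₀, then sup_{t ≥ t₀} ‖g(t)‖ < ∞. -/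
open Set

private lemma myHasDerivAt_integral {E : Type*} [NormedAddCommGroup E] [NormedSpace ℝ E]
    [CompleteSpace E] {f : ℝ → E} (hf : Continuous f) (t₀ t : ℝ) :
    HasDerivAt (fun u => ∫ s in t₀..u, f s) (f t) t :=
  intervalIntegral.integral_hasDerivAt_right (hf.intervalIntegrable _ _)
    hf.aestronglyMeasurable.stronglyMeasurableAtFilter hf.continuousAt

theorem stmt_1 (n : ℕ) (t₀ C : ℝ) (ht₀ : 0 < t₀) (hC : 0 ≤ C)
    (g : ℝ → EuclideanSpace ℝ (Fin n)) (a : ℝ → ℝ)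
    (hg : ContinuousOn g (Ici t₀))
    (ha : ContinuousOn a (Ici t₀)) (ha0 : ∀ t ∈ Ici t₀, 0 ≤ a t)
    (hbound : ∀ t ∈ Ici t₀, ‖g t + ∫ s in t₀..t, a s • g s‖ ≤ C) :
    ∃ M : ℝ, ∀ t ∈ Ici t₀, ‖g t‖ ≤ M := by
  have hmax : Continuous fun t : ℝ => max t t₀ := continuous_id.max continuous_const
  set a' : ℝ → ℝ := fun t => a (max t t₀) with ha'def
  set g' : ℝ → EuclideanSpace ℝ (Fin n) := fun t => g (max t t₀) with hg'def
  have ha'c : Continuous a' := ha.comp_continuous hmax fun x => mem_Ici.2 (le_max_right _ _)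
  have hg'c : Continuous g' := hg.comp_continuous hmax fun x => mem_Ici.2 (le_max_right _ _)
  have ha'eq : ∀ t, t₀ ≤ t → a' t = a t := fun t ht => by
    simp only [ha'def, max_eq_left ht]
  have hg'eq : ∀ t, t₀ ≤ t → g' t = g t := fun t ht => by
    simp only [hg'def, max_eq_left ht]
  have ha'0 : ∀ t, 0 ≤ a' t := fun t => ha0 _ (mem_Ici.2 (le_max_right _ _))
  set A : ℝ → ℝ := fun t => ∫ s in t₀..t, a' s with hAdef
  set h : ℝ → EuclideanSpace ℝ (Fin n) := fun t => ∫ s in t₀..t, a' s • g' s with hhdef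
  have hAderiv : ∀ t, HasDerivAt A (a' t) t := fun t => myHasDerivAt_integral ha'c t₀ t
  have hhderiv : ∀ t, HasDerivAt h (a' t • g' t) t := fun t =>
    myHasDerivAt_integral (ha'c.smul hg'c) t₀ t
  have hAcont : Continuous A := Differentiable.continuous (fun t => (hAderiv t).differentiableAt)
  have hhcont : Continuous h := Differentiable.continuous (fun t => (hhderiv t).differentiableAt)
  -- the bound rewritten for g', h
  have hbound' : ∀ t, t₀ ≤ t → ‖g' t + h t‖ ≤ C := by
    intro t ht
    have hcongr : h t = ∫ s in t₀..t, a s • g s := by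
      refine intervalIntegral.integral_congr fun s hs => ?_
      rw [uIcc_of_le ht] at hs
      rw [ha'eq s hs.1, hg'eq s hs.1]
    rw [hcongr, hg'eq t ht]
    exact hbound t ht
  set F : ℝ → EuclideanSpace ℝ (Fin n) := fun t => Real.exp (A t) • h t with hFdef
  have hFderiv : ∀ t, HasDerivAt F ((Real.exp (A t) * a' t) • (g' t + h t)) t := by
    intro t
    have h1 : HasDerivAt (fun u => Real.exp (A u)) (Real.exp (A t) * a' t) t :=
      (hAderiv t).exp
    have h2 := h1.smul (hhderiv t)
    exact h2.congr_deriv (by simp only [smul_add, mul_smul])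
  have hA0 : A t₀ = 0 := intervalIntegral.integral_same
  have hF0 : F t₀ = 0 := by
    simp only [hFdef, hhdef, intervalIntegral.integral_same, smul_zero]
  have hFcont : Continuous fun s => (Real.exp (A s) * a' s) • (g' s + h s) :=
    ((hAcont.rexp.mul ha'c).smul (hg'c.add hhcont))
  have key : ∀ t, t₀ ≤ t → ‖h t‖ ≤ C := by
    intro t ht
    have hFeq : F t = ∫ s in t₀..t, (Real.exp (A s) * a' s) • (g' s + h s) := by
      have := intervalIntegral.integral_eq_sub_of_hasDerivAt
        (f := F) (f' := fun s => (Real.exp (A s) * a' s) • (g' s + h s))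
        (fun s _ => hFderiv s) (hFcont.intervalIntegrable t₀ t)
      rw [this, hF0, sub_zero]
    -- bound on norm of F
    have hnorm1 : ‖F t‖ ≤ ∫ s in t₀..t, Real.exp (A s) * a' s * C := by
      rw [hFeq]
      refine (intervalIntegral.norm_integral_le_integral_norm ht).trans ?_
      refine intervalIntegral.integral_mono_on ht
        (hFcont.norm.intervalIntegrable t₀ t)
        (((hAcont.rexp.mul ha'c).mul continuous_const).intervalIntegrable t₀ t) ?_
      intro s hs
      have hnn : 0 ≤ Real.exp (A s) * a' s := mul_nonneg (Real.exp_pos _).le (ha'0 s)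
      rw [norm_smul, Real.norm_eq_abs, abs_of_nonneg hnn]
      exact mul_le_mul_of_nonneg_left (hbound' s hs.1) hnn
    have hint : (∫ s in t₀..t, Real.exp (A s) * a' s * C) = (Real.exp (A t) - 1) * C := by
      have hderivB : ∀ s, HasDerivAt (fun u => Real.exp (A u) * C)
          (Real.exp (A s) * a' s * C) s := fun s => ((hAderiv s).exp).mul_const C
      have := intervalIntegral.integral_eq_sub_of_hasDerivAt
        (f := fun u => Real.exp (A u) * C)
        (f' := fun s => Real.exp (A s) * a' s * C)
        (fun s _ => hderivB s)
        (((hAcont.rexp.mul ha'c).mul continuous_const).intervalIntegrable t₀ t)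
      rw [this]
      simp only [hA0, Real.exp_zero]
      ring
    have hFnorm : ‖F t‖ = Real.exp (A t) * ‖h t‖ := by
      rw [hFdef]
      simp only
      rw [norm_smul, Real.norm_eq_abs, abs_of_pos (Real.exp_pos _)]
    have hfinal : Real.exp (A t) * ‖h t‖ ≤ (Real.exp (A t) - 1) * C := by
      rw [← hFnorm, ← hint]; exact hnorm1
    have hle : (Real.exp (A t) - 1) * C ≤ Real.exp (A t) * C := by
      apply mul_le_mul_of_nonneg_right _ hC
      linarith [Real.exp_pos (A t)]
    have hpos : (0:ℝ) < Real.exp (A t) := Real.exp_pos _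
    nlinarith [hfinal, hle]
  refine ⟨C + C, fun t ht => ?_⟩
  have ht' : t₀ ≤ t := ht
  have : ‖g t‖ = ‖(g' t + h t) - h t‖ := by rw [add_sub_cancel_right, hg'eq t ht']
  rw [this]
  calc ‖(g' t + h t) - h t‖ ≤ ‖g' t + h t‖ + ‖h t‖ := norm_sub_le _ _
    _ ≤ C + C := add_le_add (hbound' t ht') (key t ht')
end

section
/- Let f : X → ℝ be convex and differentiable with L-Lipschitz gradient on a real Hilbert space X, A : X → Y a continuous linear operator, b ∈ Y, and (x*, λ*) a KKT point, i.e., ∇f(x*) + A*λ* = 0 and Ax* = b. Then for every x ∈ X and every ρ ≥ 0, the augmented Lagrangian L_ρ(x, λ*) − L_ρ(x*, λ*) ≥ (1/(2L)) ‖∇f(x) − ∇f(x*)‖², where L_ρ(x, λ) = f(x) + ⟨λ, Ax − b⟩ + (ρ/2)‖Ax − b‖². -/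
open RealInnerProductSpace

section Aux

variable {X : Type*} [NormedAddCommGroup X] [InnerProductSpace ℝ X] [CompleteSpace X]

lemma line_hasDerivAt (f : X → ℝ) (f' : X → X) (hgrad : ∀ x, HasGradientAt f (f' x) x)
    (x v : X) (t : ℝ) :
    HasDerivAt (fun s : ℝ => f (x + s • v)) ⟪f' (x + t • v), v⟫ t := by
  have hc : HasDerivAt (fun s : ℝ => x + s • v) v t := by
    simpa using ((hasDerivAt_id t).smul_const v).const_add x
  have hf := (hasGradientAt_iff_hasFDerivAt.mp (hgrad (x + t • v)))
  have := hf.comp_hasDerivAt t hc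
  exact this

lemma first_order (f : X → ℝ) (f' : X → X) (hconv : ConvexOn ℝ Set.univ f)
    (hgrad : ∀ x, HasGradientAt f (f' x) x) (x y : X) :
    f x + ⟪f' x, y - x⟫ ≤ f y := by
  set v := y - x with hv
  have hder : HasDerivAt (fun s : ℝ => f (x + s • v)) ⟪f' x, v⟫ 0 := by
    have := line_hasDerivAt f f' hgrad x v 0
    simpa using this
  have htend := hasDerivAt_iff_tendsto_slope.mp hder
  have htend' : Filter.Tendsto (slope (fun s : ℝ => f (x + s • v)) 0)
      (nhdsWithin 0 (Set.Ioi 0)) (nhds ⟪f' x, v⟫) :=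
    htend.mono_left (nhdsWithin_mono 0 (fun t ht => (Set.mem_Ioi.mp ht).ne'))
  have hbound : ∀ᶠ t in nhdsWithin (0:ℝ) (Set.Ioi 0),
      slope (fun s : ℝ => f (x + s • v)) 0 t ≤ f y - f x := by
    filter_upwards [Ioo_mem_nhdsGT_of_mem (by norm_num : (0:ℝ) ∈ Set.Ico 0 1)] with t ht
    obtain ⟨ht0, ht1⟩ := ht
    have hx : x + t • v = (1 - t) • x + t • y := by
      rw [hv]; module
    have hconvineq := hconv.2 (Set.mem_univ x) (Set.mem_univ y)
      (by linarith : (0:ℝ) ≤ 1 - t) ht0.le (by ring)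
    have hcv : f (x + t • v) ≤ (1 - t) * f x + t * f y := by
      rw [hx]
      simpa [smul_eq_mul] using hconvineq
    rw [slope_def_field, div_le_iff₀ (by simpa using ht0 : (0:ℝ) < t - 0)]
    have h0 : x + (0:ℝ) • v = x := by simp
    rw [h0]
    nlinarith [hcv]
  have := le_of_tendsto htend' hbound
  have hslope : slope (fun s : ℝ => f (x + s • v)) 0 = fun t => (f (x + t • v) - f x) / t := by
    funext t
    rw [slope_def_field]
    simp [div_eq_div_iff]
  linarith [this]

lemma descent_lemma (f : X → ℝ) (f' : X → X) (L : ℝ) (hL : 0 < L)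
    (hgrad : ∀ x, HasGradientAt f (f' x) x)
    (hlip : ∀ x y, ‖f' x - f' y‖ ≤ L * ‖x - y‖) (x y : X) :
    f y ≤ f x + ⟪f' x, y - x⟫ + L / 2 * ‖y - x‖ ^ 2 := by
  set v := y - x with hv
  have hcontf' : Continuous f' := by
    have : LipschitzWith ⟨L, hL.le⟩ f' := by
      apply LipschitzWith.of_dist_le_mul
      intro a b
      rw [dist_eq_norm, dist_eq_norm]; exact hlip a b
    exact this.continuous
  have hgcont : Continuous fun t : ℝ => ⟪f' (x + t • v), v⟫ := by
    apply Continuous.inner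
    · exact hcontf'.comp (by continuity)
    · exact continuous_const
  have hftc : ∫ t in (0:ℝ)..1, ⟪f' (x + t • v), v⟫ =
      f (x + (1:ℝ) • v) - f (x + (0:ℝ) • v) := by
    exact intervalIntegral.integral_eq_sub_of_hasDerivAt
      (f := fun s : ℝ => f (x + s • v))
      (fun t _ => line_hasDerivAt f f' hgrad x v t)
      (hgcont.intervalIntegrable 0 1)
  have hbound : ∀ t ∈ Set.Icc (0:ℝ) 1,
      ⟪f' (x + t • v), v⟫ ≤ ⟪f' x, v⟫ + L * t * ‖v‖ ^ 2 := by
    intro t ht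
    have h1 : ⟪f' (x + t • v) - f' x, v⟫ ≤ ‖f' (x + t • v) - f' x‖ * ‖v‖ :=
      real_inner_le_norm _ _
    have h2 : ‖f' (x + t • v) - f' x‖ ≤ L * (t * ‖v‖) := by
      have := hlip (x + t • v) x
      simpa [norm_smul, abs_of_nonneg ht.1, mul_assoc] using this
    have h3 : ⟪f' (x + t • v) - f' x, v⟫ ≤ L * (t * ‖v‖) * ‖v‖ :=
      h1.trans (by nlinarith [norm_nonneg v, norm_nonneg (f' (x + t • v) - f' x)])
    have h4 : ⟪f' (x + t • v) - f' x, v⟫ = ⟪f' (x + t • v), v⟫ - ⟪f' x, v⟫ := by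
      rw [inner_sub_left]
    nlinarith [h3, h4]
  have hint : ∫ t in (0:ℝ)..1, ⟪f' (x + t • v), v⟫ ≤
      ∫ t in (0:ℝ)..1, (⟪f' x, v⟫ + L * t * ‖v‖ ^ 2) := by
    apply intervalIntegral.integral_mono_on (by norm_num)
    · exact hgcont.intervalIntegrable 0 1
    · exact (by continuity : Continuous fun t : ℝ => ⟪f' x, v⟫ + L * t * ‖v‖ ^ 2).intervalIntegrable 0 1
    · exact hbound
  have hrhs : ∫ t in (0:ℝ)..1, (⟪f' x, v⟫ + L * t * ‖v‖ ^ 2) =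
      ⟪f' x, v⟫ + L / 2 * ‖v‖ ^ 2 := by
    rw [intervalIntegral.integral_add (by simp) ((by continuity :
      Continuous fun t : ℝ => L * t * ‖v‖ ^ 2).intervalIntegrable 0 1)]
    have : ∫ t in (0:ℝ)..1, L * t * ‖v‖ ^ 2 = L * ‖v‖ ^ 2 * ∫ t in (0:ℝ)..1, t := by
      rw [← intervalIntegral.integral_const_mul]
      congr 1; funext t; ring
    rw [this, integral_id]
    simp; ring
  have h0 : x + (0:ℝ) • v = x := by simp
  have h1 : x + (1:ℝ) • v = y := by rw [hv]; simp
  rw [h0, h1] at hftc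
  linarith [hint, hftc ▸ hint, hrhs]

lemma cocoercivity (f : X → ℝ) (f' : X → X) (L : ℝ) (hL : 0 < L)
    (hconv : ConvexOn ℝ Set.univ f)
    (hgrad : ∀ x, HasGradientAt f (f' x) x)
    (hlip : ∀ x y, ‖f' x - f' y‖ ≤ L * ‖x - y‖) (xs x : X) :
    f xs + ⟪f' xs, x - xs⟫ + 1 / (2 * L) * ‖f' x - f' xs‖ ^ 2 ≤ f x := by
  set d := f' x - f' xs with hd
  set p := x - (1 / L) • d with hp
  have h1 := first_order f f' hconv hgrad xs p
  have h2 := descent_lemma f f' L hL hgrad hlip x p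
  have hpx : p - x = -((1 / L) • d) := by rw [hp]; abel
  have hip1 : ⟪f' x, p - x⟫ = -(1 / L) * ⟪f' x, d⟫ := by
    rw [hpx, inner_neg_right, real_inner_smul_right]; ring
  have hnp : ‖p - x‖ ^ 2 = (1 / L) ^ 2 * ‖d‖ ^ 2 := by
    rw [hpx, norm_neg, norm_smul]
    simp [abs_of_pos (by positivity : (0:ℝ) < 1 / L), mul_pow]
  have hip2 : ⟪f' xs, p - xs⟫ = ⟪f' xs, x - xs⟫ - (1 / L) * ⟪f' xs, d⟫ := by
    have : p - xs = (x - xs) - (1 / L) • d := by rw [hp]; abel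
    rw [this, inner_sub_right, real_inner_smul_right]
  have hdd : ⟪f' x, d⟫ - ⟪f' xs, d⟫ = ‖d‖ ^ 2 := by
    rw [← inner_sub_left, ← hd, real_inner_self_eq_norm_sq]
  have hLinv : (0:ℝ) < 1 / L := by positivity
  rw [hip1, hnp] at h2
  rw [hip2] at h1
  have key : L / 2 * ((1 / L) ^ 2 * ‖d‖ ^ 2) = 1 / (2 * L) * ‖d‖ ^ 2 := by
    field_simp
  have e : 1 / L * ⟪f' x, d⟫ - 1 / L * ⟪f' xs, d⟫ = 1 / L * ‖d‖ ^ 2 := by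
    rw [← mul_sub, hdd]
  have e2 : 1 / L * ‖d‖ ^ 2 - 1 / (2 * L) * ‖d‖ ^ 2 = 1 / (2 * L) * ‖d‖ ^ 2 := by
    field_simp; ring
  linarith [h1, h2, e, e2]

end Aux

theorem stmt_3 {X Y : Type*} [NormedAddCommGroup X] [InnerProductSpace ℝ X] [CompleteSpace X]
    [NormedAddCommGroup Y] [InnerProductSpace ℝ Y] [CompleteSpace Y]
    (f : X → ℝ) (f' : X → X) (L : ℝ) (hL : 0 < L)
    (hconv : ConvexOn ℝ Set.univ f)
    (hgrad : ∀ x, HasGradientAt f (f' x) x)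
    (hlip : ∀ x y, ‖f' x - f' y‖ ≤ L * ‖x - y‖)
    (A : X →L[ℝ] Y) (b : Y) (xs : X) (ls : Y)
    (hKKT1 : f' xs + (ContinuousLinearMap.adjoint A) ls = 0)
    (hKKT2 : A xs = b) :
    ∀ (x : X) (ρ : ℝ), 0 ≤ ρ →
      (f x + ⟪ls, A x - b⟫ + (ρ/2) * ‖A x - b‖^2)
        - (f xs + ⟪ls, A xs - b⟫ + (ρ/2) * ‖A xs - b‖^2)
      ≥ (1/(2*L)) * ‖f' x - f' xs‖^2 := by
  intro x ρ hρ
  have hxs : A xs - b = 0 := by rw [hKKT2]; simp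
  have hcoco := cocoercivity f f' L hL hconv hgrad hlip xs x
  have hadj : ⟪ls, A x - b⟫ = -⟪f' xs, x - xs⟫ := by
    have h1 : A x - b = A (x - xs) := by rw [map_sub, hKKT2]
    have h2 : ⟪ls, A (x - xs)⟫ = ⟪(ContinuousLinearMap.adjoint A) ls, x - xs⟫ :=
      (ContinuousLinearMap.adjoint_inner_left A (x - xs) ls).symm
    have h3 : (ContinuousLinearMap.adjoint A) ls = -f' xs :=
      eq_neg_of_add_eq_zero_right hKKT1
    rw [h1, h2, h3, inner_neg_left]
  have hnn : 0 ≤ (ρ / 2) * ‖A x - b‖ ^ 2 := by positivity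
  rw [hxs] at *
  simp only [inner_zero_right, norm_zero] at *
  rw [hadj]
  nlinarith [hcoco]
end

section
/- Let Φ : X → ℝ be convex, differentiable, and bounded below on a real Hilbert space X with nonempty minimizer set S, and for ε > 0 let x_ε be the unique minimizer of Φ(x) + (ε/2)‖x‖². Then ‖x_ε‖ ≤ ‖x̄*‖ for all ε > 0, where x̄* is the projection of 0 onto S, and x_ε → x̄* strongly as ε → 0. -/
open Filter Set

lemma midsq {X : Type*} [NormedAddCommGroup X] [InnerProductSpace ℝ X] (a b : X) :
    ‖(1/2:ℝ)•a + (1/2:ℝ)•b‖^2 = (1/4)*(2*‖a‖^2 + 2*‖b‖^2 - ‖a-b‖^2) := by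
  have h := parallelogram_law_with_norm ℝ a b
  have h2 : (1/2:ℝ)•a + (1/2:ℝ)•b = (1/2:ℝ)•(a+b) := (smul_add _ _ _).symm
  rw [h2, norm_smul, Real.norm_eq_abs, show |(1/2:ℝ)| = 1/2 by norm_num]
  simp only [pow_two] at *
  nlinarith [h]

theorem stmt_7 {X : Type*} [NormedAddCommGroup X] [InnerProductSpace ℝ X] [CompleteSpace X]
    (Φ : X → ℝ) (hconv : ConvexOn ℝ Set.univ Φ) (hcont : Continuous Φ)
    (S : Set X) (hS : S = {y : X | ∀ z : X, Φ y ≤ Φ z}) (hSne : S.Nonempty)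
    (xbar : X) (hxbarS : xbar ∈ S) (hxbarmin : ∀ y ∈ S, ‖xbar‖ ≤ ‖y‖)
    (xε : ℝ → X)
    (hxε : ∀ ε : ℝ, 0 < ε → ∀ y : X,
      Φ (xε ε) + (ε/2) * ‖xε ε‖^2 ≤ Φ y + (ε/2) * ‖y‖^2) :
    (∀ ε : ℝ, 0 < ε → ‖xε ε‖ ≤ ‖xbar‖) ∧
    Tendsto xε (nhdsWithin 0 (Ioi 0)) (nhds xbar) := by
  have hxbarS' : ∀ z : X, Φ xbar ≤ Φ z := by rw [hS] at hxbarS; exact hxbarS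
  -- Part 1
  have key1 : ∀ ε : ℝ, 0 < ε → ‖xε ε‖ ≤ ‖xbar‖ := by
    intro ε hε
    have h1 := hxε ε hε xbar
    have h2 := hxbarS' (xε ε)
    have hsq : ‖xε ε‖^2 ≤ ‖xbar‖^2 := by nlinarith [h1, h2, hε]
    exact (pow_le_pow_iff_left₀ (norm_nonneg _) (norm_nonneg _) two_ne_zero).mp hsq
  -- strong convexity consequence
  have keyA : ∀ ε : ℝ, 0 < ε → ∀ y : X,
      Φ (xε ε) + (ε/2) * ‖xε ε‖^2 + (ε/4) * ‖xε ε - y‖^2 ≤ Φ y + (ε/2) * ‖y‖^2 := by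
    intro ε hε y
    have hconvm := hconv.2 (mem_univ (xε ε)) (mem_univ y)
      (by norm_num : (0:ℝ) ≤ 1/2) (by norm_num : (0:ℝ) ≤ 1/2) (by norm_num)
    simp only [smul_eq_mul] at hconvm
    have hm2 := midsq (xε ε) y
    have hopt := hxε ε hε ((1/2:ℝ)•(xε ε) + (1/2:ℝ)•y)
    rw [hm2] at hopt
    linarith [hopt, hconvm]
  -- monotonicity of norms
  have keyB : ∀ δ ε : ℝ, 0 < δ → δ < ε → ‖xε ε‖^2 ≤ ‖xε δ‖^2 := by
    intro δ ε hδ hδε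
    have hε : 0 < ε := hδ.trans hδε
    have ha := keyA ε hε (xε δ)
    have hb := keyA δ hδ (xε ε)
    have hrev : ‖xε δ - xε ε‖^2 = ‖xε ε - xε δ‖^2 := by rw [norm_sub_rev]
    have hεδ : (0:ℝ) < ε - δ := sub_pos.mpr hδε
    nlinarith [ha, hb, hrev, sq_nonneg ‖xε ε - xε δ‖,
      mul_nonneg (by positivity : (0:ℝ) ≤ ε + δ) (sq_nonneg ‖xε ε - xε δ‖)]
  -- Cauchy-type estimate
  have keyC : ∀ δ ε : ℝ, 0 < δ → δ < ε →
      ‖xε δ - xε ε‖^2 ≤ 2*(‖xε δ‖^2 - ‖xε ε‖^2) := by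
    intro δ ε hδ hδε
    have hε : 0 < ε := hδ.trans hδε
    have ha := keyA ε hε (xε δ)
    have h2 := hxε δ hδ (xε ε)
    have hB := keyB δ ε hδ hδε
    have hrev : ‖xε δ - xε ε‖^2 = ‖xε ε - xε δ‖^2 := by rw [norm_sub_rev]
    nlinarith [ha, h2, hB, hrev, mul_nonneg hδ.le (sub_nonneg.mpr hB), sq_nonneg ‖xε ε - xε δ‖]
  -- the sup of squared norms
  set g : ℝ → ℝ := fun ε => ‖xε ε‖^2 with hg
  have hgdef : ∀ t : ℝ, g t = ‖xε t‖^2 := fun _ => rfl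
  have hbdd : BddAbove (g '' Ioi 0) := by
    refine ⟨‖xbar‖^2, ?_⟩
    rintro _ ⟨ε, hε, rfl⟩
    have := key1 ε hε
    rw [hgdef]
    nlinarith [norm_nonneg (xε ε)]
  have hne : (g '' Ioi 0).Nonempty := ⟨g 1, 1, by norm_num, rfl⟩
  set L : ℝ := sSup (g '' Ioi 0) with hL
  -- Cauchy filter
  have hcauchy : Cauchy (map xε (nhdsWithin 0 (Ioi 0))) := by
    rw [Metric.cauchy_iff]
    constructor
    · exact Filter.NeBot.map (by exact nhdsGT_neBot 0) _
    · intro r hr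
      obtain ⟨_, ⟨ε₀, hε₀, rfl⟩, hgt⟩ := exists_lt_of_lt_csSup hne
        (show L - r^2/8 < L by nlinarith)
      refine ⟨xε '' Ioo 0 ε₀, image_mem_map (Ioo_mem_nhdsGT_of_mem ⟨le_refl 0, hε₀⟩), ?_⟩
      rintro _ ⟨a, ha, rfl⟩ _ ⟨b, hb, rfl⟩
      have hbound : ∀ c : ℝ, c ∈ Ioo (0:ℝ) ε₀ → L - r^2/8 < g c ∧ g c ≤ L := by
        intro c hc
        constructor
        · exact hgt.trans_le (keyB c ε₀ hc.1 hc.2)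
        · exact le_csSup hbdd ⟨c, hc.1, rfl⟩
      have hsq : ‖xε a - xε b‖^2 < r^2 := by
        rcases lt_trichotomy a b with h | h | h
        · have := keyC a b ha.1 h
          have h1 := hbound a ha; have h2 := hbound b hb
          nlinarith [this, h1.1, h1.2, h2.1, h2.2, hgdef a, hgdef b, pow_pos hr 2]
        · subst h; simp; positivity
        · have := keyC b a hb.1 h
          have h1 := hbound a ha; have h2 := hbound b hb
          have hrev : ‖xε a - xε b‖^2 = ‖xε b - xε a‖^2 := by rw [norm_sub_rev]
          nlinarith [this, h1.1, h1.2, h2.1, h2.2, hrev, hgdef a, hgdef b, pow_pos hr 2]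
      rw [dist_eq_norm]
      nlinarith [norm_nonneg (xε a - xε b), hr]
  obtain ⟨xstar, hxstar⟩ := CompleteSpace.complete hcauchy
  have htend : Tendsto xε (nhdsWithin 0 (Ioi 0)) (nhds xstar) := hxstar
  -- xstar ∈ S
  have hxstarS : ∀ z : X, Φ xstar ≤ Φ z := by
    intro z
    have hlhs : Tendsto (fun ε => Φ (xε ε)) (nhdsWithin 0 (Ioi 0)) (nhds (Φ xstar)) :=
      (hcont.tendsto xstar).comp htend
    have hrhs : Tendsto (fun ε : ℝ => Φ z + (ε/2) * ‖z‖^2) (nhdsWithin 0 (Ioi 0))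
        (nhds (Φ z)) := by
      have : Tendsto (fun ε : ℝ => Φ z + (ε/2) * ‖z‖^2) (nhds 0) (nhds (Φ z + (0/2) * ‖z‖^2)) := by
        apply Tendsto.add tendsto_const_nhds
        exact ((tendsto_id.div_const 2).mul tendsto_const_nhds)
      simpa using this.mono_left nhdsWithin_le_nhds
    have : Tendsto xε (nhdsWithin (0:ℝ) (Ioi 0)) (nhds xstar) := htend
    refine le_of_tendsto_of_tendsto hlhs hrhs ?_
    filter_upwards [self_mem_nhdsWithin] with ε (hε : ε ∈ Ioi (0:ℝ))
    have := hxε ε hε z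
    nlinarith [sq_nonneg ‖xε ε‖, (le_of_lt (show (0:ℝ) < ε from hε)), mul_nonneg (le_of_lt (show (0:ℝ) < ε from hε)) (sq_nonneg ‖xε ε‖)]
  -- norms
  have hnorm1 : ‖xstar‖ ≤ ‖xbar‖ := by
    have : Tendsto (fun ε => ‖xε ε‖) (nhdsWithin 0 (Ioi 0)) (nhds ‖xstar‖) := htend.norm
    refine le_of_tendsto this ?_
    filter_upwards [self_mem_nhdsWithin] with ε (hε : ε ∈ Ioi (0:ℝ))
    exact key1 ε hε
  have hnorm2 : ‖xbar‖ ≤ ‖xstar‖ := hxbarmin xstar (by rw [hS]; exact hxstarS)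
  -- midpoint and uniqueness
  have hmS : ((1/2:ℝ)•xstar + (1/2:ℝ)•xbar) ∈ S := by
    rw [hS]
    intro z
    have hc := hconv.2 (mem_univ xstar) (mem_univ xbar)
      (by norm_num : (0:ℝ) ≤ 1/2) (by norm_num : (0:ℝ) ≤ 1/2) (by norm_num)
    simp only [smul_eq_mul] at hc
    have h1 := hxstarS z
    have h2 := hxbarS' z
    linarith [hc]
  have hmge : ‖xbar‖ ≤ ‖(1/2:ℝ)•xstar + (1/2:ℝ)•xbar‖ := hxbarmin _ hmS
  have hmsq := midsq xstar xbar
  have heq : xstar = xbar := by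
    have h0 : ‖xstar - xbar‖^2 ≤ 0 := by
      nlinarith [hmsq, hmge, hnorm1, hnorm2, norm_nonneg ((1/2:ℝ)•xstar + (1/2:ℝ)•xbar),
        norm_nonneg xbar, sq_nonneg ‖xstar - xbar‖]
    have : ‖xstar - xbar‖ = 0 := by nlinarith [sq_nonneg ‖xstar - xbar‖, norm_nonneg (xstar - xbar)]
    exact sub_eq_zero.mp (norm_eq_zero.mp this)
  exact ⟨key1, heq ▸ htend⟩
end

section
/- Let Φ : X → ℝ be convex lower semicontinuous on a real Hilbert space, with minimizer x*. Suppose x : [t₀, ∞) → X satisfies Φ(x(t)) → Φ(x*) as t → ∞ and ‖x(t)‖ < ‖x̄*‖ for all t ≥ T (for some T), where x̄* is the minimal norm element of argmin Φ. Then x(t) converges strongly to x̄* as t → ∞, provided every weak sequential cluster point of (x(t)) along sequences t_n → ∞ lies in argmin Φ. -/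
open Filter Set RealInnerProductSpace

theorem stmt_14 {X : Type*} [NormedAddCommGroup X] [InnerProductSpace ℝ X] [CompleteSpace X]
    (Φ : X → ℝ) (hconv : ConvexOn ℝ Set.univ Φ)
    (hlsc : LowerSemicontinuous Φ)
    (S : Set X) (hS : S = {y : X | ∀ z : X, Φ y ≤ Φ z}) (hSne : S.Nonempty)
    (xbar : X) (hxbarS : xbar ∈ S) (hxbarmin : ∀ y ∈ S, ‖xbar‖ ≤ ‖y‖)
    (t₀ T : ℝ) (x : ℝ → X)
    (hΦlim : Tendsto (fun t => Φ (x t)) atTop (nhds (Φ xbar)))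
    (hnorm : ∀ t ∈ Ici T, ‖x t‖ < ‖xbar‖)
    (hcluster : ∀ (tn : ℕ → ℝ), Tendsto tn atTop atTop →
      ∀ p : X, (∀ y : X, Tendsto (fun n => ⟪y, x (tn n)⟫) atTop (nhds ⟪y, p⟫)) →
        p ∈ S) :
    Tendsto x atTop (nhds xbar) := by
  have hmin : ∀ z : X, Φ xbar ≤ Φ z := by rw [hS] at hxbarS; exact hxbarS
  set K : ℕ → Set X := fun n => {v : X | Φ v ≤ Φ xbar + 1 / (n + 1)} with hKdef
  have hpos : ∀ n : ℕ, (0 : ℝ) < 1 / (n + 1) := fun n => by positivity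
  have hKx : ∀ n, xbar ∈ K n := fun n =>
    le_of_lt (lt_add_of_pos_right _ (hpos n))
  have hKclosed : ∀ n, IsClosed (K n) := fun n => hlsc.isClosed_preimage _
  have hKmono : ∀ {n m : ℕ}, n ≤ m → K m ⊆ K n := by
    intro n m hnm u hu
    simp only [hKdef, Set.mem_setOf_eq] at hu ⊢
    have hc : ((n:ℝ) + 1) ≤ ((m:ℝ) + 1) := by exact_mod_cast add_le_add_left (Nat.cast_le.2 hnm) 1
    have hp : (0:ℝ) < (n:ℝ) + 1 := by positivity
    have := one_div_le_one_div_of_le hp hc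
    linarith
  have hmidK : ∀ n, ∀ u ∈ K n, ∀ w ∈ K n, (1/2 : ℝ) • u + (1/2 : ℝ) • w ∈ K n := by
    intro n u hu w hw
    have h := hconv.2 (Set.mem_univ u) (Set.mem_univ w)
      (by norm_num : (0:ℝ) ≤ 1/2) (by norm_num : (0:ℝ) ≤ 1/2) (by norm_num)
    refine le_trans h ?_
    simp only [hKdef, Set.mem_setOf_eq, smul_eq_mul] at hu hw ⊢
    linarith
  have hKconv : ∀ n, Convex ℝ (K n) := by
    intro n
    have h := hconv.convex_le (Φ xbar + 1 / (n + 1))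
    have he : {x ∈ Set.univ | Φ x ≤ Φ xbar + 1 / (n + 1)} = K n := by
      ext u; simp [hKdef]
    rwa [he] at h
  -- minimal norm elements of K n
  have hproj : ∀ n, ∃ v ∈ K n, ∀ w ∈ K n, ‖v‖ ≤ ‖w‖ := by
    intro n
    obtain ⟨v, hvK, hv⟩ := exists_norm_eq_iInf_of_complete_convex ⟨xbar, hKx n⟩
      (hKclosed n).isComplete (hKconv n) (0 : X)
    refine ⟨v, hvK, fun w hw => ?_⟩
    have h1 : ‖v‖ = ⨅ w : K n, ‖(0:X) - w‖ := by simpa using hv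
    have h2 : (⨅ w : K n, ‖(0:X) - w‖) ≤ ‖(0:X) - (⟨w, hw⟩ : K n)‖ :=
      ciInf_le ⟨0, Set.forall_mem_range.2 fun _ => norm_nonneg _⟩ _
    simpa [h1] using h2
  choose v hvK hvmin using hproj
  set d : ℕ → ℝ := fun n => ‖v n‖ with hddef
  have hd0 : ∀ n, 0 ≤ d n := fun n => norm_nonneg _
  have hdle : ∀ n, d n ≤ ‖xbar‖ := fun n => hvmin n xbar (hKx n)
  have hdmono : Monotone d := fun n m h => hvmin n (v m) (hKmono h (hvK m))
  -- parallelogram estimate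
  have hpar : ∀ n, ∀ u ∈ K n, ∀ w ∈ K n,
      ‖u - w‖ * ‖u - w‖ ≤ 2 * (‖u‖ * ‖u‖) + 2 * (‖w‖ * ‖w‖) - 4 * (d n * d n) := by
    intro n u hu w hw
    have hmid := hmidK n u hu w hw
    have hdn : d n ≤ ‖(1/2 : ℝ) • u + (1/2 : ℝ) • w‖ := hvmin n _ hmid
    have heq : (1/2 : ℝ) • u + (1/2 : ℝ) • w = (1/2 : ℝ) • (u + w) := by
      rw [smul_add]
    have hnm : ‖(1/2 : ℝ) • u + (1/2 : ℝ) • w‖ = (1/2) * ‖u + w‖ := by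
      rw [heq, norm_smul]; norm_num
    have hpl := parallelogram_law_with_norm ℝ u w
    have h2 : d n ≤ (1/2) * ‖u + w‖ := hnm ▸ hdn
    nlinarith [hd0 n, norm_nonneg (u + w)]
  -- d converges to its supremum D
  have hbdd : BddAbove (Set.range d) := ⟨‖xbar‖, Set.forall_mem_range.2 hdle⟩
  set D : ℝ := ⨆ n, d n with hDdef
  have hdD : Tendsto d atTop (nhds D) := tendsto_atTop_ciSup hdmono hbdd
  have hdleD : ∀ n, d n ≤ D := fun n => le_ciSup hbdd n
  have hDle : D ≤ ‖xbar‖ := ciSup_le hdle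
  -- v is Cauchy
  have hvC : CauchySeq v := by
    apply cauchySeq_of_le_tendsto_0 (fun N => Real.sqrt (4 * (D * D) - 4 * (d N * d N)))
    · intro n m N hn hm
      have hvn : v n ∈ K N := hKmono hn (hvK n)
      have hvm : v m ∈ K N := hKmono hm (hvK m)
      have h := hpar N (v n) hvn (v m) hvm
      rw [dist_eq_norm]
      have hb : ‖v n - v m‖ * ‖v n - v m‖ ≤ 4 * (D * D) - 4 * (d N * d N) := by
        nlinarith [hdleD n, hdleD m, hd0 n, hd0 m, hdleD N, hd0 N]
      have := Real.sqrt_le_sqrt hb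
      calc ‖v n - v m‖ = Real.sqrt (‖v n - v m‖ * ‖v n - v m‖) :=
            (Real.sqrt_mul_self (norm_nonneg _)).symm
        _ ≤ Real.sqrt (4 * (D * D) - 4 * (d N * d N)) := this
    · have h1 : Tendsto (fun N => 4 * (D * D) - 4 * (d N * d N)) atTop (nhds 0) := by
        have := ((hdD.mul hdD).const_mul (4:ℝ)).const_sub (4 * (D * D))
        simpa using this
      have h2 := (Real.continuous_sqrt.tendsto 0).comp h1
      simpa [Function.comp_def] using h2
  obtain ⟨p, hp⟩ := cauchySeq_tendsto_of_complete hvC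
  have hpK : ∀ n, p ∈ K n := by
    intro n
    refine (hKclosed n).mem_of_tendsto hp ?_
    filter_upwards [eventually_ge_atTop n] with m hm
    exact hKmono hm (hvK m)
  have hpS : p ∈ S := by
    rw [hS]
    intro z
    have hple : Φ p ≤ Φ xbar := by
      refine le_of_forall_pos_le_add fun ε hε => ?_
      obtain ⟨n, hn⟩ := exists_nat_one_div_lt hε
      exact le_trans (hpK n) (add_le_add_right hn.le _)
    exact le_trans hple (hmin z)
  have hdp : Tendsto d atTop (nhds ‖p‖) := (continuous_norm.tendsto p).comp hp
  have hDp : D = ‖p‖ := tendsto_nhds_unique hdD hdp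
  have hDeq : D = ‖xbar‖ := le_antisymm hDle (hDp ▸ hxbarmin p hpS)
  have hdxbar : Tendsto d atTop (nhds ‖xbar‖) := hDeq ▸ hdD
  -- conclude
  rw [Metric.tendsto_atTop]
  intro ε hε
  have hε2 : (0:ℝ) < ε * ε := mul_pos hε hε
  have htend : Tendsto (fun n => 4 * (‖xbar‖ * ‖xbar‖) - 4 * (d n * d n)) atTop (nhds 0) := by
    have := ((hdxbar.mul hdxbar).const_mul (4:ℝ)).const_sub (4 * (‖xbar‖ * ‖xbar‖))
    simpa using this
  obtain ⟨n, hn⟩ := (htend.eventually (eventually_lt_nhds hε2)).exists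
  have hev1 : ∀ᶠ t in atTop, Φ (x t) < Φ xbar + 1 / (n + 1) :=
    hΦlim.eventually_lt_const (lt_add_of_pos_right _ (hpos n))
  obtain ⟨N, hN⟩ := (hev1.and (eventually_ge_atTop T)).exists_forall_of_atTop
  refine ⟨N, fun t ht => ?_⟩
  obtain ⟨hΦt, hTt⟩ := hN t ht
  have hxK : x t ∈ K n := le_of_lt hΦt
  have hxn : ‖x t‖ ≤ ‖xbar‖ := (hnorm t hTt).le
  have h := hpar n (x t) hxK xbar (hKx n)
  have hsq : ‖x t - xbar‖ * ‖x t - xbar‖ < ε * ε := by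
    have hxx := mul_self_le_mul_self (norm_nonneg (x t)) hxn
    linarith
  rw [dist_eq_norm]
  by_contra hcon
  push_neg at hcon
  exact absurd hsq (not_lt.2 (mul_self_le_mul_self hε.le hcon))
end
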